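/- Let t ∈ ℂ with f(t) > 0. Then the cubic polynomial s³ − t·s² + conj(t)·s − 1 has three pairwise distinct complex roots λ₁, λ₂, λ₃ satisfying |λ₁| < 1, |λ₂| = 1 and |λ₃| > 1. -/

import Mathlib

/-- The function `f(t) = |t|⁴ − 8 Re(t³) + 18 |t|² − 27`. -/
noncomputable def fdisc (t : ℂ) : ℝ :=
  ‖t‖ ^ 4 - 8 * (t ^ 3).re + 18 * ‖t‖ ^ 2 - 27

open Polynomial

/-- The characteristic cubic `s³ − t·s² + conj(t)·s − 1`. -/
noncomputable def cubic (t : ℂ) : Polynomial ℂ :=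
  X ^ 3 - C t * X ^ 2 + C ((starRingEnd ℂ) t) * X - 1

theorem roots_of_fpos (t : ℂ) (hf : 0 < fdisc t) :
    ∃ l₁ l₂ l₃ : ℂ, l₁ ≠ l₂ ∧ l₁ ≠ l₃ ∧ l₂ ≠ l₃ ∧
      (cubic t).IsRoot l₁ ∧ (cubic t).IsRoot l₂ ∧ (cubic t).IsRoot l₃ ∧
      ‖l₁‖ < 1 ∧ ‖l₂‖ = 1 ∧ 1 < ‖l₃‖ := by
  classical
  -- root criterion
  have root_iff : ∀ s : ℂ, (cubic t).IsRoot s ↔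
      s^3 - t*s^2 + (starRingEnd ℂ) t * s - 1 = 0 := by
    intro s; simp [cubic, IsRoot]
  -- factor the cubic
  obtain ⟨a, b, c, hev⟩ : ∃ a b c : ℂ, ∀ s : ℂ,
      s^3 - t*s^2 + (starRingEnd ℂ) t * s - 1 = (s-a)*(s-b)*(s-c) := by
    have hm : (cubic t).Monic := by unfold cubic; monicity!
    have hd : (cubic t).natDegree = 3 := by unfold cubic; compute_degree!
    have hs : (cubic t).roots.card = 3 := by
      rw [← hd, ← Polynomial.splits_iff_card_roots]
      exact IsAlgClosed.splits _
    obtain ⟨a, b, c, habc⟩ := Multiset.card_eq_three.mp hs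
    have heq := (IsAlgClosed.splits (cubic t)).eq_prod_roots_of_monic hm
    rw [habc] at heq
    refine ⟨a, b, c, fun s => ?_⟩
    have := congrArg (Polynomial.eval s) heq
    simpa [cubic, mul_assoc] using this
  -- symmetric function identities
  have h0 := hev 0
  have h1 := hev 1
  have h2 := hev (-1)
  have h3 : a*b*c = 1 := by linear_combination h0
  have ht : t = a+b+c := by linear_combination (-h1 - h2)/2 + h0
  have hcc : (starRingEnd ℂ) t = a*b+a*c+b*c := by linear_combination (h1 - h2)/2
  -- the discriminant identity
  have hD : ((fdisc t : ℝ) : ℂ) = ((a-b)*(b-c)*(c-a))^2 := by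
    have habs : t * (starRingEnd ℂ) t = ((‖t‖ ^ 2 : ℝ) : ℂ) := by
      rw [Complex.mul_conj, Complex.normSq_eq_norm_sq]
    have hre : t^3 + ((starRingEnd ℂ) t)^3 = ((2 * (t^3).re : ℝ) : ℂ) := by
      rw [← map_pow]; exact Complex.add_conj _
    push_cast at habs hre
    have key : ((fdisc t : ℝ) : ℂ)
        = (t * (starRingEnd ℂ) t)^2 - 4*(t^3 + ((starRingEnd ℂ) t)^3)
          + 18*(t * (starRingEnd ℂ) t) - 27 := by
      unfold fdisc
      push_cast
      linear_combination (-(t * (starRingEnd ℂ) t + ((‖t‖ : ℂ))^2) - 18) * habs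
        + 4 * hre
    rw [key, hcc, ht]
    linear_combination (4*(a+b+c)^3 - 18*(a+b+c)*(a*b+a*c+b*c) + 27*(1 + a*b*c)) * h3
  have hf0 : ((fdisc t : ℝ) : ℂ) ≠ 0 := by
    exact_mod_cast ne_of_gt hf
  -- roots are pairwise distinct
  have hab : a ≠ b := by intro h; apply hf0; rw [hD, h]; ring
  have hbc : b ≠ c := by intro h; apply hf0; rw [hD, h]; ring
  have hac : a ≠ c := by intro h; apply hf0; rw [hD, h]; ring
  -- roots are nonzero
  have ha0 : a ≠ 0 := by intro h; rw [h] at h3; simp at h3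
  have hb0 : b ≠ 0 := by intro h; rw [h] at h3; simp at h3
  have hc0 : c ≠ 0 := by intro h; rw [h] at h3; simp at h3
  -- each root is a, b or c
  have hmem : ∀ s : ℂ, s^3 - t*s^2 + (starRingEnd ℂ) t * s - 1 = 0 →
      s = a ∨ s = b ∨ s = c := by
    intro s hs
    have := (hev s).symm.trans hs
    rcases mul_eq_zero.mp this with h | h
    · rcases mul_eq_zero.mp h with h | h
      · exact Or.inl (sub_eq_zero.mp h)
      · exact Or.inr (Or.inl (sub_eq_zero.mp h))
    · exact Or.inr (Or.inr (sub_eq_zero.mp h))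
  have ra : a^3 - t*a^2 + (starRingEnd ℂ) t * a - 1 = 0 := by rw [hev a]; ring
  have rb : b^3 - t*b^2 + (starRingEnd ℂ) t * b - 1 = 0 := by rw [hev b]; ring
  have rc : c^3 - t*c^2 + (starRingEnd ℂ) t * c - 1 = 0 := by rw [hev c]; ring
  -- σ(x) = 1/conj(x) maps roots to roots
  have hσroot : ∀ l : ℂ, l ≠ 0 → l^3 - t*l^2 + (starRingEnd ℂ) t * l - 1 = 0 →
      (1/(starRingEnd ℂ) l)^3 - t*(1/(starRingEnd ℂ) l)^2
        + (starRingEnd ℂ) t * (1/(starRingEnd ℂ) l) - 1 = 0 := by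
    intro l hl h
    have hcj : ((starRingEnd ℂ) l)^3 - (starRingEnd ℂ) t * ((starRingEnd ℂ) l)^2
        + t * (starRingEnd ℂ) l - 1 = 0 := by
      have := congrArg (starRingEnd ℂ) h
      simpa using this
    have hl' : (starRingEnd ℂ) l ≠ 0 := by simpa using hl
    field_simp
    linear_combination (-1) * hcj
  have hσinv : ∀ x : ℂ, x ≠ 0 → 1/(starRingEnd ℂ) (1/(starRingEnd ℂ) x) = x := by
    intro x hx; simp [map_div₀]
  have hfix : ∀ x : ℂ, x ≠ 0 → (1/(starRingEnd ℂ) x = x ↔ ‖x‖ = 1) := by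
    intro x hx
    have hx' : (starRingEnd ℂ) x ≠ 0 := by simpa using hx
    rw [div_eq_iff hx', Complex.mul_conj]
    constructor
    · intro h
      have hn : Complex.normSq x = 1 := by exact_mod_cast h.symm
      have := Complex.sq_norm x
      nlinarith [norm_nonneg x]
    · intro h
      have hn : Complex.normSq x = 1 := by rw [← Complex.sq_norm, h]; norm_num
      rw [hn]; norm_num
  have hswap : ∀ x y : ℂ, x ≠ 0 → 1/(starRingEnd ℂ) x = y →
      ‖x‖ * ‖y‖ = 1 := by
    intro x y hx h
    have hx' : (starRingEnd ℂ) x ≠ 0 := by simpa using hx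
    have hxy : (starRingEnd ℂ) x * y = 1 := by rw [← h]; field_simp
    have := congrArg (‖·‖) hxy
    simpa [map_mul] using this
  -- not all roots on the unit circle
  have notall : ¬ (‖a‖ = 1 ∧ ‖b‖ = 1 ∧ ‖c‖ = 1) := by
    rintro ⟨ha, hb, hc⟩
    have conj_eq : ∀ x : ℂ, x ≠ 0 → ‖x‖ = 1 → (starRingEnd ℂ) x = x⁻¹ := by
      intro x hx h1
      have hh : x * (starRingEnd ℂ) x = 1 := by
        rw [Complex.mul_conj, ← Complex.sq_norm, h1]; norm_num
      field_simp at hh ⊢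
      linear_combination hh
    have hA := conj_eq a ha0 ha
    have hB := conj_eq b hb0 hb
    have hC := conj_eq c hc0 hc
    set r : ℝ := Complex.normSq (a-b) * Complex.normSq (b-c) * Complex.normSq (c-a) with hr
    have hrpos : 0 ≤ r := mul_nonneg (mul_nonneg (Complex.normSq_nonneg _)
      (Complex.normSq_nonneg _)) (Complex.normSq_nonneg _)
    have hval : ((a-b)*(b-c)*(c-a))^2 = ((-r : ℝ) : ℂ) := by
      have e1 : ((Complex.normSq (a-b) : ℝ) : ℂ)
          = (a-b) * ((starRingEnd ℂ) a - (starRingEnd ℂ) b) := by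
        rw [← map_sub, Complex.mul_conj]
      have e2 : ((Complex.normSq (b-c) : ℝ) : ℂ)
          = (b-c) * ((starRingEnd ℂ) b - (starRingEnd ℂ) c) := by
        rw [← map_sub, Complex.mul_conj]
      have e3 : ((Complex.normSq (c-a) : ℝ) : ℂ)
          = (c-a) * ((starRingEnd ℂ) c - (starRingEnd ℂ) a) := by
        rw [← map_sub, Complex.mul_conj]
      rw [hr]; push_cast
      rw [e1, e2, e3, hA, hB, hC]
      field_simp
      linear_combination (((a-b)*(b-c)*(c-a)) * (a*b*c + 1)) * h3
    rw [hval] at hD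
    have : fdisc t = -r := by exact_mod_cast hD
    linarith
  -- finisher
  have finish : ∀ x y z : ℂ, x ≠ y → x ≠ z → y ≠ z →
      x^3 - t*x^2 + (starRingEnd ℂ) t * x - 1 = 0 →
      y^3 - t*y^2 + (starRingEnd ℂ) t * y - 1 = 0 →
      z^3 - t*z^2 + (starRingEnd ℂ) t * z - 1 = 0 →
      ‖x‖ = 1 → ‖y‖ * ‖z‖ = 1 → ‖y‖ ≠ 1 →
      ∃ l₁ l₂ l₃ : ℂ, l₁ ≠ l₂ ∧ l₁ ≠ l₃ ∧ l₂ ≠ l₃ ∧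
        (cubic t).IsRoot l₁ ∧ (cubic t).IsRoot l₂ ∧ (cubic t).IsRoot l₃ ∧
        ‖l₁‖ < 1 ∧ ‖l₂‖ = 1 ∧ 1 < ‖l₃‖ := by
    intro x y z hxy hxz hyz rx ry rz hx1 hyz1 hy1
    have hy0 : 0 ≤ ‖y‖ := norm_nonneg y
    have hz0 : 0 ≤ ‖z‖ := norm_nonneg z
    rcases lt_or_gt_of_ne hy1 with hlt | hgt
    · have hzgt : 1 < ‖z‖ := by nlinarith
      exact ⟨y, x, z, Ne.symm hxy, hyz, hxz,
        (root_iff y).mpr ry, (root_iff x).mpr rx, (root_iff z).mpr rz, hlt, hx1, hzgt⟩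
    · have hzlt : ‖z‖ < 1 := by nlinarith
      exact ⟨z, x, y, Ne.symm hxz, Ne.symm hyz, hxy,
        (root_iff z).mpr rz, (root_iff x).mpr rx, (root_iff y).mpr ry, hzlt, hx1, hgt⟩
  -- case analysis on where σ sends the roots
  have hma := hmem _ (hσroot a ha0 ra)
  rcases hma with h1 | h1 | h1
  · -- σ a = a, so |a| = 1
    have habs1 : ‖a‖ = 1 := (hfix a ha0).mp h1
    have hmb := hmem _ (hσroot b hb0 rb)
    rcases hmb with h2 | h2 | h2
    · -- σ b = a : then b = σ a = a, contradiction
      exfalso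
      have := congrArg (fun w => 1/(starRingEnd ℂ) w) h2
      rw [hσinv b hb0, h1] at this
      exact hab this.symm
    · -- σ b = b, so |b| = 1
      have hbabs : ‖b‖ = 1 := (hfix b hb0).mp h2
      have hmc := hmem _ (hσroot c hc0 rc)
      rcases hmc with h4 | h4 | h4
      · exfalso
        have := congrArg (fun w => 1/(starRingEnd ℂ) w) h4
        rw [hσinv c hc0, h1] at this
        exact hac this.symm
      · exfalso
        have := congrArg (fun w => 1/(starRingEnd ℂ) w) h4
        rw [hσinv c hc0, h2] at this
        exact hbc this.symm
      · exact absurd ⟨habs1, hbabs, (hfix c hc0).mp h4⟩ notall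
    · -- σ b = c : |b||c| = 1, |b| ≠ 1
      have hprod := hswap b c hb0 h2
      have hbne : ‖b‖ ≠ 1 := by
        intro h
        exact hbc (((hfix b hb0).mpr h).symm.trans h2)
      exact finish a b c hab hac hbc ra rb rc habs1 hprod hbne
  · -- σ a = b : |a||b| = 1, |a| ≠ 1
    have hprod := hswap a b ha0 h1
    have hane : ‖a‖ ≠ 1 := by
      intro h
      exact hab (((hfix a ha0).mpr h).symm.trans h1)
    have hmc := hmem _ (hσroot c hc0 rc)
    rcases hmc with h2 | h2 | h2
    · exfalso
      have := congrArg (fun w => 1/(starRingEnd ℂ) w) h2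
      rw [hσinv c hc0, h1] at this
      exact hbc this.symm
    · exfalso
      -- σ c = b = σ a, so c = a
      have e1 := congrArg (fun w => 1/(starRingEnd ℂ) w) h1
      have e2 := congrArg (fun w => 1/(starRingEnd ℂ) w) h2
      rw [hσinv a ha0] at e1
      rw [hσinv c hc0] at e2
      exact hac (e1.trans e2.symm)
    · -- σ c = c : |c| = 1
      have hcabs : ‖c‖ = 1 := (hfix c hc0).mp h2
      exact finish c a b (Ne.symm hac) (Ne.symm hbc) hab rc ra rb hcabs hprod hane
  · -- σ a = c : |a||c| = 1, |a| ≠ 1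
    have hprod := hswap a c ha0 h1
    have hane : ‖a‖ ≠ 1 := by
      intro h
      exact hac (((hfix a ha0).mpr h).symm.trans h1)
    have hmb := hmem _ (hσroot b hb0 rb)
    rcases hmb with h2 | h2 | h2
    · exfalso
      have := congrArg (fun w => 1/(starRingEnd ℂ) w) h2
      rw [hσinv b hb0, h1] at this
      exact hbc this
    · -- σ b = b : |b| = 1
      have hbabs : ‖b‖ = 1 := (hfix b hb0).mp h2
      exact finish b a c (Ne.symm hab) hbc hac rb ra rc hbabs hprod hane
    · exfalso
      -- σ b = c = σ a, so b = a
      have e1 := congrArg (fun w => 1/(starRingEnd ℂ) w) h1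
      have e2 := congrArg (fun w => 1/(starRingEnd ℂ) w) h2
      rw [hσinv a ha0] at e1
      rw [hσinv b hb0] at e2
      exact hab (e1.trans e2.symm)
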